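/- The sequence b = (β_n, β_{n−1}, …, β_1) is a perfect basis for the hyperoctahedral group B_n: every signed permutation w ∈ B_n has a unique presentation w = β_n^{k_n} β_{n−1}^{k_{n−1}} ⋯ β_1^{k_1} with 0 ≤ k_i < 2i for all 1 ≤ i ≤ n, and the order of β_i equals 2i. -/

import Mathlib

open scoped Classical

/-- `prodPow a k` is the ordered product `a 0 ^ k 0 * a 1 ^ k 1 * ⋯ * a (n-1) ^ k (n-1)`. -/
def prodPow {G : Type*} [Group G] {n : ℕ} (a : Fin n → G) (k : Fin n → ℕ) : G :=
  (List.ofFn fun i => a i ^ k i).prod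

/-- The sequence `a` gives a unique presentation `g = a 0 ^ k 0 * ⋯ * a (n-1) ^ k (n-1)`
with `0 ≤ k i < m i` for every element `g` of the group. -/
def IsUniqueProd {G : Type*} [Group G] {n : ℕ} (a : Fin n → G) (m : Fin n → ℕ) : Prop :=
  ∀ g : G, ∃! k : (i : Fin n) → Fin (m i), g = prodPow a fun i => (k i : ℕ)

/-- A perfect basis: every group element has a unique presentation with each exponent
below the order of the corresponding basis element. -/
def IsPerfectBasis {G : Type*} [Group G] {n : ℕ} (a : Fin n → G) : Prop :=
  IsUniqueProd a fun i => orderOf (a i)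

/-- Every element of the subset `A` of the group `G` has a unique presentation
`g = a 0 ^ k 0 * ⋯ * a (n-1) ^ k (n-1)` with `0 ≤ k i < m i`. -/
def IsUniqueProdOn {G : Type*} [Group G] (A : Set G) {n : ℕ} (a : Fin n → G)
    (m : Fin n → ℕ) : Prop :=
  ∀ g ∈ A, ∃! k : (i : Fin n) → Fin (m i), g = prodPow a fun i => (k i : ℕ)


/-- Encoding of the letters `{±1, …, ±n}`: letter `j` is `(⟨j-1⟩, false)` and `-j` is
`(⟨j-1⟩, true)`. -/
abbrev SF (n : ℕ) := Fin n × Bool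

/-- Negation of a letter. -/
def negx {n : ℕ} (x : SF n) : SF n := (x.1, !x.2)

/-- The hyperoctahedral group `B_n`: permutations `w` of `{±1,…,±n}` with `w(-i) = -w(i)`. -/
def BSet (n : ℕ) : Set (Equiv.Perm (SF n)) := {w | ∀ x, w (negx x) = negx (w x)}

/-- `sadj n j` is the Coxeter generator `s_{j+1}` of `B_n`: the signed permutation
exchanging the values `j+1` and `j+2` (1-indexed) as well as `-(j+1)` and `-(j+2)`. -/
def sadj (n j : ℕ) : Equiv.Perm (SF n) :=
  if h : j + 1 < n then
    Equiv.swap (⟨j, Nat.lt_of_succ_lt h⟩, false) (⟨j + 1, h⟩, false) *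
      Equiv.swap (⟨j, Nat.lt_of_succ_lt h⟩, true) (⟨j + 1, h⟩, true)
  else 1

/-- The generator `s_0 = [-1, 2, …, n]` of `B_n`. -/
def s0B (n : ℕ) : Equiv.Perm (SF n) :=
  if h : 0 < n then Equiv.swap (⟨0, h⟩, false) (⟨0, h⟩, true) else 1

/-- The generator `s_0' = [-2, -1, 3, …, n]` of `D_n`. -/
def s0D (n : ℕ) : Equiv.Perm (SF n) :=
  if h : 2 ≤ n then
    Equiv.swap (⟨0, by omega⟩, false) (⟨1, by omega⟩, true) *
      Equiv.swap (⟨1, by omega⟩, false) (⟨0, by omega⟩, true)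
  else 1

/-- The signed permutation `v_n = [1, 2, …, n-1, -n]`. -/
def muP (n : ℕ) : Equiv.Perm (SF n) :=
  if h : 0 < n then Equiv.swap (⟨n - 1, by omega⟩, false) (⟨n - 1, by omega⟩, true) else 1

/-- `betaP n i = β_i = [-i, 1, 2, …, i-1, i+1, …, n] = s_{i-1} ⋯ s_1 s_0`. -/
def betaP (n i : ℕ) : Equiv.Perm (SF n) :=
  ((List.range (i - 1)).reverse.map (sadj n)).prod * s0B n

/-- `deltaP n i = δ_i` for `1 ≤ i ≤ n`: for `i ≤ n-1`,
`δ_i = [-i, 1, 2, …, i-1, i+1, …, n-1, -n] = β_i v_n`, while `δ_n = [n, 1, 2, …, n-1]`. -/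
def deltaP (n i : ℕ) : Equiv.Perm (SF n) :=
  if i = n then ((List.range (n - 1)).reverse.map (sadj n)).prod
  else betaP n i * muP n

/-- The Coxeter generating set `S = {s_0, s_1, …, s_{n-1}}` of `B_n`. -/
def SgenB (n : ℕ) : Set (Equiv.Perm (SF n)) :=
  {w | w = s0B n ∨ ∃ j : ℕ, j + 1 < n ∧ w = sadj n j}

/-- The Coxeter generating set `S' = {s_0', s_1, …, s_{n-1}}` of `D_n`. -/
def SgenD (n : ℕ) : Set (Equiv.Perm (SF n)) :=
  {w | w = s0D n ∨ ∃ j : ℕ, j + 1 < n ∧ w = sadj n j}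

/-- The word length of `g` with respect to a set `S` of generators: the least `l` such
that `g` is a product of `l` elements of `S`. -/
noncomputable def wordLength {G : Type*} [Group G] (S : Set G) (g : G) : ℕ :=
  sInf {l | ∃ w : List G, (∀ x ∈ w, x ∈ S) ∧ w.length = l ∧ w.prod = g}

/-- The group `D_n` of even signed permutations: elements of `B_n` with an even number of
negative entries in their window. -/
def DSet (n : ℕ) : Set (Equiv.Perm (SF n)) :=
  {w | w ∈ BSet n ∧ Even (Finset.univ.filter fun i : Fin n => (w (i, false)).2 = true).card}

/-- The alternating subgroup `B_n^+` of `B_n`: elements of even Coxeter length. -/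
def BplusSet (n : ℕ) : Set (Equiv.Perm (SF n)) :=
  {w | w ∈ BSet n ∧ Even (wordLength (SgenB n) w)}

/-- The bijection `ψ : D_n → B_n^+`: `ψ(w) = w` if `w ∈ B_n^+`, otherwise `ψ(w) = w·v_n`
(negating the last letter of the window of `w`). -/
noncomputable def psiP (n : ℕ) (w : Equiv.Perm (SF n)) : Equiv.Perm (SF n) :=
  if w ∈ BplusSet n then w else w * muP n

/-- The generating set `R = {r_1, …, r_{n-1}}` of `B_n^+`, where `r_1 = [2, -1, 3, …, n]`
and `r_i = [-1, 2, …, i-1, i+1, i, i+2, …, n]` for `2 ≤ i ≤ n-1`; here `r_i = s_0 s_i`. -/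
def RSet (n : ℕ) : Set (Equiv.Perm (SF n)) :=
  {w | ∃ i : ℕ, 1 ≤ i ∧ i ≤ n - 1 ∧ w = s0B n * sadj n (i - 1)}

/-- The set `R ∪ R⁻¹`. -/
def RRinv (n : ℕ) : Set (Equiv.Perm (SF n)) :=
  RSet n ∪ {w | w⁻¹ ∈ RSet n}

/-- The basis `b = (β_n, β_{n-1}, …, β_1)` for `B_n`. -/
def bSeq (n : ℕ) : Fin n → Equiv.Perm (SF n) := fun j => betaP n (n - j.val)

/-- The basis `d = (δ_n, δ_{n-1}, …, δ_1)` for `D_n`. -/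
def dSeq (n : ℕ) : Fin n → Equiv.Perm (SF n) := fun j => deltaP n (n - j.val)

/-- The basis `c = (γ_n, γ_{n-1}, …, γ_1) = (ψ(δ_n), …, ψ(δ_1))` for `B_n^+`. -/
noncomputable def cSeq (n : ℕ) : Fin n → Equiv.Perm (SF n) :=
  fun j => psiP n (deltaP n (n - j.val))

/-- The exponent bounds for the bases `d` and `c`: `k_n < n` and `k_i < 2i` for `i < n`. -/
def mD (n : ℕ) : Fin n → ℕ := fun j => if j.val = 0 then n else 2 * (n - j.val)

/-- The exponent bounds for the basis `b`: `k_i < 2i`. -/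
def mB (n : ℕ) : Fin n → ℕ := fun j => 2 * (n - j.val)


namespace PB

lemma s0B_apply {n : ℕ} (hn : 0 < n) (x : SF n) :
    s0B n x = if x.1.val = 0 then negx x else x := by
  obtain ⟨⟨j, hj⟩, b⟩ := x
  simp only [s0B, dif_pos hn]
  by_cases h : j = 0
  · subst h
    cases b <;> simp [Equiv.swap_apply_def, negx]
  · rw [Equiv.swap_apply_of_ne_of_ne] <;> simp [Prod.ext_iff, Fin.ext_iff, h, negx]

lemma sadj_apply {n t : ℕ} (h : t + 1 < n) (x : SF n) :
    sadj n t x = if x.1.val = t then (⟨t+1, h⟩, x.2)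
      else if x.1.val = t+1 then (⟨t, by omega⟩, x.2) else x := by
  obtain ⟨⟨j, hj⟩, b⟩ := x
  simp only [sadj, dif_pos h, Equiv.Perm.mul_apply]
  cases b <;>
  · by_cases h1 : j = t
    · subst h1; simp [Equiv.swap_apply_def, Prod.ext_iff, Fin.ext_iff]
    · by_cases h2 : j = t + 1
      · subst h2
        simp [Equiv.swap_apply_def, Prod.ext_iff, Fin.ext_iff] <;> omega
      · simp [Equiv.swap_apply_def, Prod.ext_iff, Fin.ext_iff, h1, h2]


lemma betaP_one (n : ℕ) : betaP n 1 = s0B n := by simp [betaP]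

lemma betaP_succ (n i : ℕ) (hi : 1 ≤ i) : betaP n (i+1) = sadj n (i-1) * betaP n i := by
  obtain ⟨j, rfl⟩ := Nat.exists_eq_add_of_le hi
  have h1 : 1 + j + 1 - 1 = j + 1 := by omega
  have h2 : 1 + j - 1 = j := by omega
  rw [betaP, betaP, h1, h2, List.range_succ]
  simp [mul_assoc]

lemma betaP_apply {n : ℕ} (i : ℕ) (hi : 1 ≤ i) (hn : i ≤ n) (x : SF n) :
    betaP n i x = if x.1.val = 0 then (⟨i-1, by omega⟩, !x.2)
      else if x.1.val < i then (⟨x.1.val - 1, by omega⟩, x.2) else x := by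
  induction i, hi using Nat.le_induction with
  | base =>
    rw [betaP_one, s0B_apply (by omega)]
    obtain ⟨⟨j, hj⟩, b⟩ := x
    by_cases h : j = 0 <;> simp [h, negx, Prod.ext_iff, Fin.ext_iff] <;> omega
  | succ i hi IH =>
    have hin : i ≤ n := by omega
    have hsw : (i - 1) + 1 < n := by omega
    rw [betaP_succ n i hi, Equiv.Perm.mul_apply, IH hin, sadj_apply hsw]
    obtain ⟨⟨j, hj⟩, b⟩ := x
    dsimp only
    split_ifs <;> dsimp only at * <;>
      first
        | rfl
        | (simp only [Prod.mk.injEq, Fin.mk.injEq, and_true]; omega)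
        | (exfalso; omega)


def encx (i : ℕ) {n : ℕ} (x : SF n) : ℕ := x.1.val + if x.2 then i else 0

def decx (n i x : ℕ) (hi : 1 ≤ i) (hn : i ≤ n) : SF n :=
  (⟨x % (2*i) % i, lt_of_lt_of_le (Nat.mod_lt _ (by omega)) hn⟩, decide (i ≤ x % (2*i)))

lemma decx_congr {n i : ℕ} {a b : ℕ} (hi : 1 ≤ i) (hn : i ≤ n)
    (h : a % (2*i) = b % (2*i)) : decx n i a hi hn = decx n i b hi hn := by
  simp only [decx, h]

lemma decx_cast_congr {n i : ℕ} {a b : ℕ} (hi : 1 ≤ i) (hn : i ≤ n)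
    (h : (a : ZMod (2*i)) = (b : ZMod (2*i))) : decx n i a hi hn = decx n i b hi hn :=
  decx_congr hi hn ((ZMod.natCast_eq_natCast_iff _ _ _).1 h)

lemma decx_fst_lt {n i x : ℕ} (hi : 1 ≤ i) (hn : i ≤ n) :
    (decx n i x hi hn).1.val < i := Nat.mod_lt _ (by omega)

lemma decx_small {n i x : ℕ} (hi : 1 ≤ i) (hn : i ≤ n) (h : x < i) :
    decx n i x hi hn = (⟨x, by omega⟩, false) := by
  have h1 : x % (2*i) = x := Nat.mod_eq_of_lt (by omega)
  simp only [decx, h1, Nat.mod_eq_of_lt h, Prod.mk.injEq, Fin.mk.injEq]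
  simp [decide_eq_false]
  omega

lemma decx_mid {n i x : ℕ} (hi : 1 ≤ i) (hn : i ≤ n) (h1 : i ≤ x) (h2 : x < 2*i) :
    decx n i x hi hn = (⟨x - i, by omega⟩, true) := by
  have e1 : x % (2*i) = x := Nat.mod_eq_of_lt h2
  have e2 : x % i = x - i := by
    rw [Nat.mod_eq_sub_mod h1, Nat.mod_eq_of_lt (by omega)]
  simp only [decx, e1, e2, Prod.mk.injEq, Fin.mk.injEq]
  simp [h1]

lemma decx_reduce {n i x : ℕ} (hi : 1 ≤ i) (hn : i ≤ n) (h : 2*i ≤ x) :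
    decx n i x hi hn = decx n i (x - 2*i) hi hn :=
  decx_congr hi hn (Nat.mod_eq_sub_mod h)

lemma encx_decx {n i x : ℕ} (hi : 1 ≤ i) (hn : i ≤ n) :
    encx i (decx n i x hi hn) = x % (2*i) := by
  set y := x % (2*i) with hy
  have hylt : y < 2*i := Nat.mod_lt _ (by omega)
  by_cases h : i ≤ y
  · rw [show decx n i x hi hn = decx n i y hi hn from
      decx_congr hi hn (Nat.mod_mod_of_dvd x dvd_rfl).symm,
      decx_mid hi hn h hylt]
    simp [encx]; omega
  · rw [show decx n i x hi hn = decx n i y hi hn from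
      decx_congr hi hn (Nat.mod_mod_of_dvd x dvd_rfl).symm,
      decx_small hi hn (by omega)]
    simp [encx]

lemma decx_encx {n i : ℕ} {x : SF n} (hi : 1 ≤ i) (hn : i ≤ n) (hx : x.1.val < i) :
    decx n i (encx i x) hi hn = x := by
  obtain ⟨⟨j, hj⟩, b⟩ := x
  cases b
  · rw [show encx i ((⟨j,hj⟩ : Fin n), false) = j from by simp [encx],
      decx_small hi hn hx]
  · rw [show encx i ((⟨j,hj⟩ : Fin n), true) = j + i from by simp [encx],
      decx_mid hi hn (by omega) (by simp at hx; omega)]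
    simp

lemma negx_decx {n i x : ℕ} (hi : 1 ≤ i) (hn : i ≤ n) :
    negx (decx n i x hi hn) = decx n i (x + i) hi hn := by
  have hred : decx n i x hi hn = decx n i (x % (2*i)) hi hn :=
    decx_congr hi hn (Nat.mod_mod_of_dvd x dvd_rfl).symm
  have hred2 : decx n i (x + i) hi hn = decx n i (x % (2*i) + i) hi hn :=
    decx_congr hi hn (Nat.mod_add_mod x (2*i) i).symm
  rw [hred, hred2]
  set y := x % (2*i) with hy
  have hylt : y < 2*i := Nat.mod_lt _ (by omega)
  by_cases h : i ≤ y
  · rw [decx_mid hi hn h hylt, decx_reduce hi hn (by omega : 2*i ≤ y + i),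
      decx_small hi hn (by omega : y + i - 2*i < i)]
    simp [negx, Prod.ext_iff, Fin.ext_iff] <;> omega
  · rw [decx_small hi hn (by omega), decx_mid hi hn (by omega) (by omega)]
    simp [negx, Prod.ext_iff, Fin.ext_iff] <;> omega


lemma betaP_apply_dec {n i : ℕ} (hi : 1 ≤ i) (hn : i ≤ n) (x : SF n) :
    betaP n i x = if x.1.val < i then decx n i (encx i x + (2*i - 1)) hi hn else x := by
  rw [betaP_apply i hi hn]
  obtain ⟨⟨j, hj⟩, b⟩ := x
  by_cases h0 : j = 0
  · subst h0
    cases b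
    · rw [if_pos rfl, if_pos (by omega : (0:ℕ) < i),
        show encx i ((⟨0, hj⟩ : Fin n), false) + (2*i-1) = 2*i - 1 from by simp [encx],
        decx_mid hi hn (by omega) (by omega)]
      simp only [Prod.mk.injEq, Fin.mk.injEq]
      exact ⟨by omega, by trivial⟩
    · rw [if_pos rfl, if_pos (by omega : (0:ℕ) < i),
        show encx i ((⟨0, hj⟩ : Fin n), true) + (2*i-1) = i + (2*i - 1) from by simp [encx],
        decx_reduce hi hn (by omega), decx_small hi hn (by omega)]
      simp only [Prod.mk.injEq, Fin.mk.injEq]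
      exact ⟨by omega, by trivial⟩
  · by_cases h1 : j < i
    · rw [if_neg h0, if_pos h1, if_pos (show j < i from h1)]
      cases b
      · rw [show encx i ((⟨j, hj⟩ : Fin n), false) + (2*i-1) = j + (2*i - 1) from by simp [encx],
          decx_reduce hi hn (by omega), decx_small hi hn (by omega)]
        simp only [Prod.mk.injEq, Fin.mk.injEq]
        exact ⟨by omega, by trivial⟩
      · rw [show encx i ((⟨j, hj⟩ : Fin n), true) + (2*i-1) = j + i + (2*i - 1) from by simp [encx],
          decx_reduce hi hn (by omega), decx_mid hi hn (by omega) (by omega)]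
        simp only [Prod.mk.injEq, Fin.mk.injEq]
        exact ⟨by omega, by trivial⟩
    · rw [if_neg h0, if_neg h1, if_neg (show ¬ (j < i) from h1)]

lemma betaP_pow_apply {n i : ℕ} (hi : 1 ≤ i) (hn : i ≤ n) (k : ℕ) (x : SF n) :
    (betaP n i ^ k) x =
      if x.1.val < i then decx n i (encx i x + (2*i - 1) * k) hi hn else x := by
  induction k with
  | zero =>
    by_cases h : x.1.val < i
    · simp only [pow_zero, if_pos h, Nat.mul_zero, Nat.add_zero, Equiv.Perm.one_apply]
      exact (decx_encx hi hn h).symm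
    · simp [h]
  | succ k IH =>
    rw [pow_succ', Equiv.Perm.mul_apply, IH]
    by_cases h : x.1.val < i
    · rw [if_pos h, if_pos h]
      set y := decx n i (encx i x + (2*i-1)*k) hi hn with hy
      have hylt : y.1.val < i := decx_fst_lt hi hn
      rw [betaP_apply_dec hi hn y, if_pos hylt]
      have he : encx i y = (encx i x + (2*i-1)*k) % (2*i) := encx_decx hi hn
      refine (decx_congr hi hn ?_)
      rw [he, Nat.mod_add_mod]
      have : encx i x + (2*i-1)*k + (2*i-1) = encx i x + (2*i-1)*(k+1) := by ring
      rw [this]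
    · rw [if_neg h, if_neg h, betaP_apply_dec hi hn x, if_neg h]

lemma betaP_pow_apply_of_ge {n i : ℕ} (hi : 1 ≤ i) (hn : i ≤ n) (k : ℕ) {x : SF n}
    (h : i ≤ x.1.val) : (betaP n i ^ k) x = x := by
  rw [betaP_pow_apply hi hn, if_neg (by omega)]


lemma cast_two_i {i : ℕ} : ((2*i : ℕ) : ZMod (2*i)) = 0 := ZMod.natCast_self _

lemma cast_two_i_sub_one {i : ℕ} (hi : 1 ≤ i) : ((2*i - 1 : ℕ) : ZMod (2*i)) = -1 := by
  rw [Nat.cast_sub (by omega : 1 ≤ 2*i), cast_two_i]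
  push_cast
  ring

lemma betaP_pow_mem {n i : ℕ} (hi : 1 ≤ i) (hn : i ≤ n) (k : ℕ) :
    (betaP n i) ^ k ∈ BSet n := by
  intro x
  by_cases h : x.1.val < i
  · have hneg : (negx x).1.val < i := h
    rw [betaP_pow_apply hi hn k, betaP_pow_apply hi hn k, if_pos h, if_pos hneg]
    have key : decx n i (encx i (negx x) + (2*i-1)*k) hi hn
        = decx n i ((encx i x + (2*i-1)*k) + i) hi hn := by
      refine decx_cast_congr hi hn ?_
      obtain ⟨⟨j, hj⟩, b⟩ := x
      have h2 : ((2*i : ℕ) : ZMod (2*i)) = 0 := cast_two_i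
      push_cast at h2
      cases b
      · simp only [negx, encx, Bool.not_false, Bool.not_true, if_true, if_false]
        push_cast [cast_two_i_sub_one hi]
        ring
      · simp only [negx, encx, Bool.not_false, Bool.not_true, if_true, if_false]
        push_cast [cast_two_i_sub_one hi]
        linear_combination -h2
    rw [key, ← negx_decx hi hn]
  · have hneg : ¬ (negx x).1.val < i := h
    rw [betaP_pow_apply hi hn k, betaP_pow_apply hi hn k, if_neg h, if_neg hneg]

lemma betaP_mem {n i : ℕ} (hi : 1 ≤ i) (hn : i ≤ n) : betaP n i ∈ BSet n := by
  have := betaP_pow_mem hi hn 1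
  rwa [pow_one] at this

lemma betaP_pow_eq_one_iff {n i : ℕ} (hi : 1 ≤ i) (hn : i ≤ n) (k : ℕ) :
    betaP n i ^ k = 1 ↔ 2*i ∣ k := by
  constructor
  · intro h
    have hx := congrArg (fun w : Equiv.Perm (SF n) => w ((⟨0, by omega⟩ : Fin n), false)) h
    simp only [Equiv.Perm.one_apply] at hx
    rw [betaP_pow_apply hi hn k, if_pos (by simp; omega)] at hx
    have he := congrArg (encx i) hx
    rw [encx_decx hi hn] at he
    have he2 : (encx i (((⟨0, by omega⟩ : Fin n), false) : SF n) + (2*i-1)*k) % (2*i) = 0 := by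
      simpa [encx] using he
    have hdvd : 2*i ∣ (2*i - 1) * k := by
      have : encx i (((⟨0, by omega⟩ : Fin n), false) : SF n) = 0 := by simp [encx]
      rw [this, Nat.zero_add] at he2
      exact Nat.dvd_of_mod_eq_zero he2
    have hdvd2 : 2*i ∣ 2*i*k := dvd_mul_right _ _
    have hsub : 2*i*k - (2*i - 1)*k = k := by
      have := Nat.sub_mul (2*i) (2*i - 1) k
      rw [show 2*i - (2*i - 1) = 1 from by omega, one_mul] at this
      omega
    have := Nat.dvd_sub hdvd2 hdvd
    rwa [hsub] at this
  · rintro ⟨t, rfl⟩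
    refine Equiv.ext fun x => ?_
    rw [betaP_pow_apply hi hn, Equiv.Perm.one_apply]
    by_cases h : x.1.val < i
    · rw [if_pos h]
      have : decx n i (encx i x + (2*i-1)*(2*i*t)) hi hn = decx n i (encx i x) hi hn := by
        refine decx_cast_congr hi hn ?_
        have h2 : ((2*i : ℕ) : ZMod (2*i)) = 0 := cast_two_i
        push_cast [cast_two_i_sub_one hi] at h2 ⊢
        linear_combination (-(1:ZMod (2*i)) * t) * h2
      rw [this, decx_encx hi hn h]
    · rw [if_neg h]

lemma orderOf_betaP {n i : ℕ} (hi : 1 ≤ i) (hn : i ≤ n) : orderOf (betaP n i) = 2*i := by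
  refine Nat.dvd_antisymm ?_ ?_
  · exact orderOf_dvd_of_pow_eq_one ((betaP_pow_eq_one_iff hi hn _).2 dvd_rfl)
  · exact (betaP_pow_eq_one_iff hi hn _).1 (pow_orderOf_eq_one _)

lemma exponent_unique {n i : ℕ} (hi : 1 ≤ i) (hn : i ≤ n) {s t : ℕ}
    (hs : s < 2*i) (ht : t < 2*i)
    (h : (betaP n i ^ s) ((⟨i-1, by omega⟩ : Fin n), false)
       = (betaP n i ^ t) ((⟨i-1, by omega⟩ : Fin n), false)) : s = t := by
  rw [betaP_pow_apply hi hn, betaP_pow_apply hi hn, if_pos (by simp; omega),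
    if_pos (by simp; omega)] at h
  have he := congrArg (encx i) h
  rw [encx_decx hi hn, encx_decx hi hn] at he
  have hz : ((encx i (((⟨i-1, by omega⟩ : Fin n), false) : SF n) + (2*i-1)*s : ℕ) : ZMod (2*i))
      = ((encx i (((⟨i-1, by omega⟩ : Fin n), false) : SF n) + (2*i-1)*t : ℕ) : ZMod (2*i)) := by
    rw [ZMod.natCast_eq_natCast_iff]
    exact he
  haveI : NeZero (2*i) := ⟨by omega⟩
  have hst : ((s : ℕ) : ZMod (2*i)) = ((t : ℕ) : ZMod (2*i)) := by
    push_cast [cast_two_i_sub_one hi] at hz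
    linear_combination -hz
  have := congrArg ZMod.val hst
  rwa [ZMod.val_cast_of_lt hs, ZMod.val_cast_of_lt ht] at this


lemma exponent_exists {n i : ℕ} (hi : 1 ≤ i) (hn : i ≤ n) {y : SF n} (hy : y.1.val < i) :
    ∃ t : ℕ, t < 2*i ∧ (betaP n i ^ t) ((⟨i-1, by omega⟩ : Fin n), false) = y := by
  have hylt : encx i y < 2*i := by
    obtain ⟨⟨j, hj⟩, b⟩ := y
    simp only at hy
    cases b <;> simp [encx] <;> omega
  refine ⟨(3*i - 1 - encx i y) % (2*i), Nat.mod_lt _ (by omega), ?_⟩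
  rw [betaP_pow_apply hi hn, if_pos (by simp; omega)]
  conv_rhs => rw [← decx_encx hi hn hy]
  refine decx_cast_congr hi hn ?_
  have h2 : ((2*i : ℕ) : ZMod (2*i)) = 0 := cast_two_i
  have hencx0 : encx i (((⟨i-1, by omega⟩ : Fin n), false) : SF n) = i - 1 := by simp [encx]
  rw [hencx0]
  push_cast [cast_two_i_sub_one hi, ZMod.natCast_mod,
    Nat.cast_sub (show encx i y ≤ 3*i - 1 by omega),
    Nat.cast_sub (show 1 ≤ 3*i by omega),
    Nat.cast_sub (show 1 ≤ i from hi)] at h2 ⊢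
  linear_combination -h2

lemma BSet_one {n : ℕ} : (1 : Equiv.Perm (SF n)) ∈ BSet n := fun _ => rfl

lemma BSet_mul {n : ℕ} {u v : Equiv.Perm (SF n)} (hu : u ∈ BSet n) (hv : v ∈ BSet n) :
    u * v ∈ BSet n := fun x => by
  simp only [Equiv.Perm.mul_apply, hv x, hu (v x)]

lemma BSet_inv {n : ℕ} {u : Equiv.Perm (SF n)} (hu : u ∈ BSet n) : u⁻¹ ∈ BSet n := by
  intro x
  apply u.injective
  rw [Equiv.Perm.coe_inv, Equiv.apply_symm_apply, hu, Equiv.apply_symm_apply]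

def tpd {G : Type*} [Group G] {n : ℕ} (a : Fin n → G) (k : Fin n → ℕ) (t : ℕ) : G :=
  ((List.ofFn fun i => a i ^ k i).drop t).prod

lemma tpd_ge {G : Type*} [Group G] {n : ℕ} (a : Fin n → G) (k : Fin n → ℕ) {t : ℕ}
    (h : n ≤ t) : tpd a k t = 1 := by
  rw [tpd, List.drop_eq_nil_of_le (by simpa using h)]
  rfl

lemma tpd_lt {G : Type*} [Group G] {n : ℕ} (a : Fin n → G) (k : Fin n → ℕ) {t : ℕ}
    (h : t < n) : tpd a k t = a ⟨t, h⟩ ^ k ⟨t, h⟩ * tpd a k (t+1) := by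
  rw [tpd, tpd, List.drop_eq_getElem_cons (by simpa using h), List.prod_cons,
    List.getElem_ofFn]

lemma tpd_congr {G : Type*} [Group G] {n : ℕ} (a : Fin n → G) (k1 k2 : Fin n → ℕ)
    (t : ℕ) (h : ∀ i : Fin n, t ≤ i.val → k1 i = k2 i) : tpd a k1 t = tpd a k2 t := by
  obtain ⟨d, hd⟩ : ∃ d, n - t = d := ⟨_, rfl⟩
  induction d generalizing t with
  | zero => rw [tpd_ge a k1 (by omega), tpd_ge a k2 (by omega)]
  | succ d IH =>
    have ht : t < n := by omega
    rw [tpd_lt a k1 ht, tpd_lt a k2 ht, h ⟨t, ht⟩ (le_refl _),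
      IH (t+1) (fun i hi => h i (by omega)) (by omega)]



def zkB (n : ℕ) (i : Fin n) : Fin (mB n i) := ⟨0, by have := i.isLt; simp only [mB]; omega⟩

lemma prodPow_eq_tpd {G : Type*} [Group G] {n : ℕ} (a : Fin n → G) (k : Fin n → ℕ) :
    prodPow a k = tpd a k 0 := by
  rw [tpd, List.drop_zero, prodPow]

lemma tpd_fix {n : ℕ} (k : Fin n → ℕ) {x : SF n} (t : ℕ) (hx : n - t ≤ x.1.val) :
    (tpd (bSeq n) k t) x = x := by
  obtain ⟨d, hd⟩ : ∃ d, n - t = d := ⟨_, rfl⟩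
  induction d generalizing t with
  | zero => rw [tpd_ge _ _ (by omega)]; rfl
  | succ d IH =>
    have ht : t < n := by omega
    rw [tpd_lt _ _ ht, Equiv.Perm.mul_apply, IH (t+1) (by omega) (by omega)]
    show (betaP n (n - t) ^ k ⟨t, ht⟩) x = x
    exact betaP_pow_apply_of_ge (by omega) (by omega) _ (by omega)

lemma main (n : ℕ) : ∀ m : ℕ, m ≤ n → ∀ w : Equiv.Perm (SF n), w ∈ BSet n →
    (∀ x : SF n, m ≤ x.1.val → w x = x) →
    ∃! k : (i : Fin n) → Fin (mB n i),
      (∀ i : Fin n, i.val < n - m → k i = zkB n i) ∧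
      w = tpd (bSeq n) (fun i => (k i : ℕ)) (n - m) := by
  intro m
  induction m with
  | zero =>
    intro _ w hw hfix
    refine ⟨zkB n, ⟨fun i _ => rfl, ?_⟩, ?_⟩
    · rw [Nat.sub_zero, tpd_ge _ _ (le_refl n)]
      exact Equiv.ext fun x => hfix x (Nat.zero_le _)
    · rintro k ⟨hk, -⟩
      exact funext fun i => hk i (by have := i.isLt; omega)
  | succ m IH =>
    intro hm w hw hfix
    have hm' : m ≤ n := by omega
    have hi1 : 1 ≤ m + 1 := by omega
    have hin : m + 1 ≤ n := hm
    set B := betaP n (m+1) with hB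
    set x0 : SF n := ((⟨m, by omega⟩ : Fin n), false) with hx0def
    have hy : (w x0).1.val < m + 1 := by
      by_contra hc
      push_neg at hc
      have h1 : w (w x0) = w x0 := hfix _ (by omega)
      have h2 : w x0 = x0 := w.injective h1
      rw [h2] at hc
      simp only [hx0def] at hc
      omega
    obtain ⟨t, ht, hbt⟩ := exponent_exists hi1 hin hy
    have hmm : (((⟨m+1-1, by omega⟩ : Fin n), false) : SF n) = x0 := by
      simp [hx0def, Prod.ext_iff, Fin.ext_iff]
    rw [hmm] at hbt
    set w' := (B ^ t)⁻¹ * w with hw'def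
    have hw' : w' ∈ BSet n := BSet_mul (BSet_inv (betaP_pow_mem hi1 hin t)) hw
    have hfix'false : w' x0 = x0 := by
      show (B ^ t)⁻¹ (w x0) = x0
      rw [← hbt, Equiv.Perm.coe_inv, Equiv.symm_apply_apply]
    have hfix' : ∀ x : SF n, m ≤ x.1.val → w' x = x := by
      intro x hx
      by_cases hxm : m + 1 ≤ x.1.val
      · have h1 : (B ^ t) x = x := betaP_pow_apply_of_ge hi1 hin t hxm
        show (B ^ t)⁻¹ (w x) = x
        rw [hfix x hxm]
        apply (B ^ t).injective
        rw [Equiv.Perm.coe_inv, Equiv.apply_symm_apply, h1]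
      · have hxval : x.1.val = m := by omega
        rcases x with ⟨⟨j, hj⟩, b⟩
        simp only at hxval
        cases b
        · have hxx : ((⟨j, hj⟩ : Fin n), false) = x0 := by
            simp [hx0def, Prod.ext_iff, Fin.ext_iff, hxval]
          rw [hxx]
          exact hfix'false
        · have hneg := hw' ((⟨j, hj⟩ : Fin n), false)
          have hxx : ((⟨j, hj⟩ : Fin n), false) = x0 := by
            simp [hx0def, Prod.ext_iff, Fin.ext_iff, hxval]
          rw [hxx] at hneg
          rw [show (((⟨j, hj⟩ : Fin n), true) : SF n) = negx x0 from by
            simp [hx0def, negx, Prod.ext_iff, Fin.ext_iff, hxval]]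
          rw [hneg, hfix'false]
    obtain ⟨k', ⟨hk'0, hk'w⟩, huniq⟩ := IH hm' w' hw' hfix'
    have hi0lt : n - (m+1) < n := by omega
    set i0 : Fin n := ⟨n - (m+1), hi0lt⟩ with hi0
    have hbSeq : bSeq n i0 = B := by
      simp only [bSeq, hB, hi0]
      congr 1
      omega
    have htlt : t < mB n i0 := by
      simp only [mB, hi0]
      omega
    set tFin : Fin (mB n i0) := ⟨t, htlt⟩ with htFin
    set k := Function.update k' i0 tFin with hk
    have hsucc : n - (m+1) + 1 = n - m := by omega
    have hne_of_ge : ∀ i : Fin n, n - m ≤ i.val → i ≠ i0 := by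
      intro i hi hc
      rw [hc] at hi
      simp only [hi0] at hi
      omega
    have hki0 : ((k i0 : ℕ)) = t := by rw [hk, Function.update_self]
    have hcongrk : tpd (bSeq n) (fun i => (k i : ℕ)) (n - m)
        = tpd (bSeq n) (fun i => (k' i : ℕ)) (n - m) := by
      refine tpd_congr _ _ _ _ fun i hi => ?_
      rw [hk, Function.update_of_ne (hne_of_ge i hi)]
    refine ⟨k, ⟨?_, ?_⟩, ?_⟩
    · intro i hi
      have hne : i ≠ i0 := by
        intro hc
        rw [hc] at hi
        simp only [hi0] at hi
        omega
      rw [hk, Function.update_of_ne hne]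
      exact hk'0 i (by omega)
    · rw [tpd_lt _ _ hi0lt, hsucc]
      show w = bSeq n i0 ^ (k i0 : ℕ) * tpd (bSeq n) (fun i => (k i : ℕ)) (n - m)
      rw [hbSeq, hki0, hcongrk, ← hk'w, hw'def]
      exact (mul_inv_cancel_left _ _).symm
    · rintro k2 ⟨hk20, hk2w⟩
      have hk2w' : w = B ^ (k2 i0 : ℕ) * tpd (bSeq n) (fun i => (k2 i : ℕ)) (n - m) := by
        rw [hk2w, tpd_lt _ _ hi0lt, hsucc, ← hbSeq]
      have heval : w x0 = (B ^ (k2 i0 : ℕ)) x0 := by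
        rw [hk2w', Equiv.Perm.mul_apply, tpd_fix _ _ (by simp only [hx0def]; omega)]
      have hk2t : ((k2 i0 : ℕ)) = t := by
        refine exponent_unique hi1 hin (by have := (k2 i0).isLt; simp only [mB, hi0] at this; omega)
          ht ?_
        rw [hmm, ← heval, hbt]
      have hw'eq : tpd (bSeq n) (fun i => (k2 i : ℕ)) (n - m) = w' := by
        rw [hw'def]
        rw [hk2t] at hk2w'
        rw [hk2w', ← mul_assoc, inv_mul_cancel, one_mul]
      set k2' := Function.update k2 i0 (zkB n i0) with hk2'
      have h1 : ∀ i : Fin n, i.val < n - m → k2' i = zkB n i := by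
        intro i hi
        by_cases h : i = i0
        · rw [h, hk2', Function.update_self]
        · rw [hk2', Function.update_of_ne h]
          have : i.val ≠ n - (m+1) := fun hc => h (Fin.ext hc)
          exact hk20 i (by omega)
      have h2 : w' = tpd (bSeq n) (fun i => (k2' i : ℕ)) (n - m) := by
        rw [← hw'eq]
        refine (tpd_congr _ _ _ _ fun i hi => ?_).symm
        rw [hk2', Function.update_of_ne (hne_of_ge i hi)]
      have hk2'k' : k2' = k' := huniq k2' ⟨h1, h2⟩
      funext i
      by_cases h : i = i0
      · rw [h, hk, Function.update_self]
        exact Fin.ext (by rw [htFin] at *; exact hk2t)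
      · rw [hk, Function.update_of_ne h, ← hk2'k', hk2', Function.update_of_ne h]


end PB


/-- The sequence `b = (β_n, β_{n-1}, …, β_1)` is a perfect basis for
the hyperoctahedral group `B_n`: each `β_i` lies in `B_n` and has order `2i`, and every
`w ∈ B_n` has a unique presentation `w = β_n^{k_n} ⋯ β_1^{k_1}` with `0 ≤ k_i < 2i`. -/
theorem beta_isPerfectBasis_hyperoctahedral (n : ℕ) :
    (∀ j : Fin n, bSeq n j ∈ BSet n) ∧
    (∀ i : ℕ, 1 ≤ i → i ≤ n → orderOf (betaP n i) = 2 * i) ∧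
    IsUniqueProdOn (BSet n) (bSeq n) (mB n) := by
  refine ⟨fun j => ?_, fun i hi hn => PB.orderOf_betaP hi hn, ?_⟩
  · exact PB.betaP_mem (by have := j.isLt; omega) (by omega)
  · intro w hw
    obtain ⟨k, ⟨-, hk⟩, huniq⟩ :=
      PB.main n n (le_refl n) w hw (fun x hx => absurd x.1.isLt (Nat.not_lt.2 hx))
    rw [Nat.sub_self] at hk huniq
    refine ⟨k, ?_, ?_⟩
    · show w = prodPow (bSeq n) fun i => ((k i : ℕ))
      rw [PB.prodPow_eq_tpd]
      exact hk
    · intro k2 hk2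
      refine huniq k2 ⟨fun i hi => absurd hi (by omega), ?_⟩
      rw [← PB.prodPow_eq_tpd]
      exact hk2
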